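/- arXiv:1704.06185 — 3 statements merged into one kernel-verified Lean document; each statement's English description precedes it below -/
import Mathlib

section
/- Let d ≥ 36 be an integer and δ ∈ [0, 1/2]. Let S ⊆ {0,1}^d be any subset with |S| ≥ (1/2 + δ)·2^d. Then (1/(d·2^{d−1})) · Σ_{x ∈ S} wt(x) ≥ 1/2 + δ − 3/√d, where wt(x) is the Hamming weight of x. -/
open Finset

/-- flipping one coordinate negates F ⇒ sum is zero -/
lemma flip_sum {d : ℕ} (j : Fin d) (F : (Fin d → Bool) → ℝ)
    (hF : ∀ x, F (Function.update x j (!x j)) = -F x) :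
    ∑ x : Fin d → Bool, F x = 0 := by
  have inv : ∀ x : Fin d → Bool,
      Function.update (Function.update x j (!x j)) j (!(Function.update x j (!x j)) j) = x := by
    intro x
    simp [Function.update_idem]
  let e : (Fin d → Bool) ≃ (Fin d → Bool) :=
    ⟨fun x => Function.update x j (!x j), fun x => Function.update x j (!x j), inv, inv⟩
  have h1 : ∑ x : Fin d → Bool, F (e x) = ∑ x : Fin d → Bool, F x := Equiv.sum_comp e F
  have h2 : ∑ x : Fin d → Bool, F (e x) = -∑ x : Fin d → Bool, F x := by
    simp only [e, Equiv.coe_fn_mk, hF, Finset.sum_neg_distrib]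
  linarith

noncomputable def eps : Bool → ℝ := fun b => if b then 1 else -1

lemma eps_not (b : Bool) : eps (!b) = -eps b := by cases b <;> simp [eps]

lemma eps_sq (b : Bool) : eps b * eps b = 1 := by cases b <;> simp [eps]

lemma sum_eps {d : ℕ} (j : Fin d) : ∑ x : Fin d → Bool, eps (x j) = 0 := by
  apply flip_sum j
  intro x
  rw [Function.update_self, eps_not]

lemma sum_eps_mul {d : ℕ} (j k : Fin d) (hjk : j ≠ k) :
    ∑ x : Fin d → Bool, eps (x j) * eps (x k) = 0 := by
  apply flip_sum j
  intro x
  rw [Function.update_self, Function.update_of_ne (Ne.symm hjk), eps_not]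
  ring

lemma sum_eps_sq {d : ℕ} :
    ∑ x : Fin d → Bool, (∑ j : Fin d, eps (x j)) ^ 2 = (d : ℝ) * 2 ^ d := by
  have : ∀ x : Fin d → Bool, (∑ j : Fin d, eps (x j)) ^ 2
      = ∑ j : Fin d, ∑ k : Fin d, eps (x j) * eps (x k) := by
    intro x; rw [sq, Finset.sum_mul_sum]
  simp_rw [this]
  rw [Finset.sum_comm]
  have : ∀ j : Fin d, ∑ x : Fin d → Bool, ∑ k : Fin d, eps (x j) * eps (x k)
      = (2 : ℝ) ^ d := by
    intro j
    rw [Finset.sum_comm]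
    have hterm : ∀ k : Fin d, ∑ x : Fin d → Bool, eps (x j) * eps (x k)
        = if k = j then (2 : ℝ) ^ d else 0 := by
      intro k
      by_cases h : k = j
      · subst h
        simp [eps_sq, Finset.card_univ]
      · simp [h, sum_eps_mul j k (Ne.symm h)]
    simp [hterm]
  simp [this, Finset.card_univ, mul_comm]

lemma sum_eps_eq_wt {d : ℕ} (x : Fin d → Bool) :
    ∑ j : Fin d, eps (x j)
      = 2 * ((Finset.univ.filter (fun j => x j = true)).card : ℝ) - d := by
  have : ∀ j : Fin d, eps (x j) = 2 * (if x j = true then (1 : ℝ) else 0) - 1 := by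
    intro j; cases h : x j <;> simp [eps, h] <;> norm_num
  rw [Finset.sum_congr rfl fun j _ => this j, Finset.sum_sub_distrib, ← Finset.mul_sum,
    Finset.sum_boole]
  simp [Finset.card_univ]


/-- Hypercube averaging: if S ⊆ {0,1}^d has |S| ≥ (1/2+δ)·2^d with d ≥ 36 and
    δ ∈ [0,1/2], then the average Hamming weight satisfies
    (1/(d·2^{d−1})) Σ_{x∈S} wt(x) ≥ 1/2 + δ − 3/√d. -/
theorem stmt_8 (d : ℕ) (hd : 36 ≤ d) (δ : ℝ) (hδ0 : 0 ≤ δ) (hδ1 : δ ≤ 1 / 2)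
    (S : Finset (Fin d → Bool))
    (hS : (1 / 2 + δ) * 2 ^ d ≤ (S.card : ℝ)) :
    1 / 2 + δ - 3 / Real.sqrt d ≤
      (1 / ((d : ℝ) * 2 ^ (d - 1))) *
        ∑ x ∈ S, ((Finset.univ.filter (fun j => x j = true)).card : ℝ) := by
  set g : (Fin d → Bool) → ℝ :=
    fun x => ((Finset.univ.filter (fun j => x j = true)).card : ℝ) - d / 2 with hg
  have hgeps : ∀ x, 2 * g x = ∑ j : Fin d, eps (x j) := by
    intro x; rw [sum_eps_eq_wt]; simp [hg]; ring
  have hd0 : (0:ℝ) < d := by positivity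
  have hsd : Real.sqrt d * Real.sqrt d = d := Real.mul_self_sqrt (le_of_lt hd0)
  have hsd0 : (0:ℝ) < Real.sqrt d := Real.sqrt_pos.mpr hd0
  -- sum of g over univ is 0
  have hsum0 : ∑ x : Fin d → Bool, g x = 0 := by
    have h1 : ∑ x : Fin d → Bool, 2 * g x = 0 := by
      rw [Finset.sum_congr rfl fun x _ => hgeps x, Finset.sum_comm]
      simp [sum_eps]
    rw [← Finset.mul_sum] at h1
    linarith
  -- sum of g^2 over univ
  have hsumsq : ∑ x : Fin d → Bool, g x ^ 2 = (d : ℝ) * 2 ^ d / 4 := by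
    have h1 : ∑ x : Fin d → Bool, (2 * g x) ^ 2 = (d : ℝ) * 2 ^ d := by
      rw [Finset.sum_congr rfl fun x _ => by rw [hgeps x]]
      exact sum_eps_sq
    have h2 : ∑ x : Fin d → Bool, (2 * g x) ^ 2 = 4 * ∑ x : Fin d → Bool, g x ^ 2 := by
      rw [Finset.mul_sum]; exact Finset.sum_congr rfl fun x _ => by ring
    linarith
  -- Cauchy-Schwarz: sum of |g| ≤ 2^(d-1) √d
  have hcard : ((Finset.univ : Finset (Fin d → Bool)).card : ℝ) = 2 ^ d := by
    simp [Finset.card_univ]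
  have habs : ∑ x : Fin d → Bool, |g x| ≤ 2 ^ d * Real.sqrt d / 2 := by
    have hcs := sq_sum_le_card_mul_sum_sq (s := (Finset.univ : Finset (Fin d → Bool)))
      (f := fun x => |g x|)
    simp_rw [sq_abs] at hcs
    rw [hsumsq, hcard] at hcs
    have hb : (0:ℝ) ≤ 2 ^ d * Real.sqrt d / 2 := by positivity
    have ha : (0:ℝ) ≤ ∑ x : Fin d → Bool, |g x| :=
      Finset.sum_nonneg fun x _ => abs_nonneg _
    have hb2 : (2 ^ d * Real.sqrt d / 2) ^ 2 = 2 ^ d * ((d:ℝ) * 2 ^ d / 4) := by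
      rw [div_pow, mul_pow, sq (Real.sqrt _), hsd]; ring
    nlinarith [hcs, ha, hb, hsd0]
  -- lower bound the sum over S
  have hsplit : ∑ x ∈ S, g x + ∑ x ∈ Sᶜ, g x = 0 := by
    rw [Finset.sum_add_sum_compl]; exact hsum0
  have hSg : -(2 ^ d * Real.sqrt d / 2) ≤ ∑ x ∈ S, g x := by
    have h1 : ∑ x ∈ Sᶜ, g x ≤ ∑ x ∈ Sᶜ, |g x| :=
      Finset.sum_le_sum fun x _ => le_abs_self _
    have h2 : ∑ x ∈ Sᶜ, |g x| ≤ ∑ x : Fin d → Bool, |g x| :=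
      Finset.sum_le_sum_of_subset_of_nonneg (Finset.subset_univ _)
        (fun x _ _ => abs_nonneg _)
    linarith
  have hA : (d : ℝ) / 2 * S.card - 2 ^ d * Real.sqrt d / 2
      ≤ ∑ x ∈ S, ((Finset.univ.filter (fun j => x j = true)).card : ℝ) := by
    have hrw : ∑ x ∈ S, ((Finset.univ.filter (fun j => x j = true)).card : ℝ)
        = ∑ x ∈ S, (g x + (d:ℝ) / 2) := by
      apply Finset.sum_congr rfl
      intro x _
      simp [hg]
    rw [hrw, Finset.sum_add_distrib, Finset.sum_const, nsmul_eq_mul]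
    linarith
  -- final arithmetic
  have hpow : (2:ℝ) ^ d = 2 ^ (d - 1) * 2 := by
    rw [← pow_succ]
    congr 1
    omega
  have hpos : (0:ℝ) < (d : ℝ) * 2 ^ (d - 1) := by positivity
  have hP : (0:ℝ) < (2:ℝ) ^ (d - 1) := by positivity
  have h3 : 3 / Real.sqrt d * (d:ℝ) = 3 * Real.sqrt d := by
    field_simp
    nlinarith [hsd]
  have key : (1/2 + δ - 3 / Real.sqrt d) * ((d:ℝ) * 2 ^ (d - 1))
      ≤ (d : ℝ) / 2 * S.card - 2 ^ d * Real.sqrt d / 2 := by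
    have hdn : (d:ℝ)/2 * ((1/2+δ) * 2^d) ≤ (d:ℝ)/2 * S.card := by
      apply mul_le_mul_of_nonneg_left hS
      positivity
    have e1 : (1/2 + δ - 3 / Real.sqrt d) * ((d:ℝ) * 2 ^ (d - 1))
        = (1/2 + δ) * ((d:ℝ) * 2 ^ (d - 1)) - (3 / Real.sqrt d * (d:ℝ)) * 2 ^ (d-1) := by
      ring
    rw [e1, h3]
    have e2 : (d:ℝ)/2 * ((1/2+δ) * 2^d) - 2 ^ d * Real.sqrt d / 2
        = (1/2 + δ) * ((d:ℝ) * 2 ^ (d - 1)) - Real.sqrt d * 2 ^ (d-1) := by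
      rw [hpow]; ring
    nlinarith [mul_pos hsd0 hP]
  rw [div_mul_eq_mul_div, one_mul, le_div_iff₀ hpos]
  exact key.trans hA
end

section
/- For any μ ∈ (0, 1] and α > 0 with (1+α)μ ≤ 1, the binary relative entropy satisfies D((1+α)μ ‖ μ) ≥ (1/2)·α·log₂(1+α)·μ, where D(δ‖μ) = δ log₂(δ/μ) + (1−δ) log₂((1−δ)/(1−μ)). -/
/-- `log(1+x) ≥ x/(1+x)` for `x ≥ 0`. -/
lemma aux_log_lb (x : ℝ) (hx : 0 ≤ x) : x / (1 + x) ≤ Real.log (1 + x) := by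
  have h1 : (0:ℝ) < 1 + x := by linarith
  have h2 := Real.log_le_sub_one_of_pos (show (0:ℝ) < 1 / (1 + x) by positivity)
  rw [Real.log_div one_ne_zero (ne_of_gt h1), Real.log_one] at h2
  have h3 : 1 - 1 / (1 + x) = x / (1 + x) := by field_simp; ring
  linarith

/-- `(1 + x/2) * log(1+x) ≥ x` for `x ≥ 0`. -/
lemma aux_key (x : ℝ) (hx : 0 ≤ x) : x ≤ (1 + x / 2) * Real.log (1 + x) := by
  set f : ℝ → ℝ := fun y => (1 + y / 2) * Real.log (1 + y) - y with hf
  have hderiv : ∀ y : ℝ, 0 ≤ y →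
      HasDerivAt f ((1 / 2) * Real.log (1 + y) + (1 + y / 2) * (1 / (1 + y)) - 1) y := by
    intro y hy
    have h1 : (0:ℝ) < 1 + y := by linarith
    have hlog : HasDerivAt (fun z : ℝ => Real.log (1 + z)) (1 / (1 + y)) y := by
      have := (Real.hasDerivAt_log (ne_of_gt h1)).comp y
        ((hasDerivAt_const y (1:ℝ)).add (hasDerivAt_id y))
      simpa [Function.comp_def] using this
    have hpoly : HasDerivAt (fun z : ℝ => 1 + z / 2) (1 / 2) y := by
      simpa using ((hasDerivAt_id y).div_const 2).const_add 1
    simpa [hf, Pi.mul_def, Pi.sub_def] using (hpoly.mul hlog).sub (hasDerivAt_id y)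
  have hmono : MonotoneOn f (Set.Ici (0:ℝ)) := by
    apply monotoneOn_of_deriv_nonneg (convex_Ici 0)
    · apply ContinuousOn.sub
      · apply ContinuousOn.mul (by fun_prop)
        apply Real.continuousOn_log.comp (by fun_prop)
        intro y hy
        have : (0:ℝ) < 1 + y := by
          simp only [Set.mem_Ici] at hy; linarith
        simp [ne_of_gt this]
      · fun_prop
    · intro y hy
      rw [interior_Ici] at hy
      have hy' : 0 < y := hy
      exact ((hderiv y hy'.le).differentiableAt).differentiableWithinAt
    · intro y hy
      rw [interior_Ici] at hy
      have hy' : 0 < y := hy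
      rw [(hderiv y hy'.le).deriv]
      have h1 : (0:ℝ) < 1 + y := by linarith
      have h2 := aux_log_lb y hy'.le
      have h3 : (1 + y / 2) * (1 / (1 + y)) - 1 = -((1 / 2) * (y / (1 + y))) := by
        field_simp; ring
      linarith
  have h0 : f 0 = 0 := by simp [hf]
  have := hmono (Set.mem_Ici.mpr le_rfl) (Set.mem_Ici.mpr hx) hx
  rw [h0] at this
  simp only [hf] at this
  linarith

/-- For μ ∈ (0,1], α > 0 with (1+α)μ ≤ 1:
    D((1+α)μ ‖ μ) ≥ (1/2)·α·log₂(1+α)·μ. -/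
theorem stmt_11 (μ α : ℝ) (hμ0 : 0 < μ) (hμ1 : μ ≤ 1) (hα : 0 < α)
    (h : (1 + α) * μ ≤ 1) :
    (1 / 2) * α * Real.logb 2 (1 + α) * μ ≤
      (1 + α) * μ * Real.logb 2 ((1 + α) * μ / μ) +
        (1 - (1 + α) * μ) * Real.logb 2 ((1 - (1 + α) * μ) / (1 - μ)) := by
  have hμμ : (1 + α) * μ / μ = 1 + α := by
    field_simp
  rw [hμμ]
  set δ := (1 + α) * μ with hδ
  set L := Real.log (1 + α) with hL
  have h1α : (0:ℝ) < 1 + α := by linarith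
  have hLpos : 0 < L := Real.log_pos (by linarith)
  have hμlt1 : μ < 1 := by nlinarith
  have h1μ : (0:ℝ) < 1 - μ := by linarith
  have hlog2 : (0:ℝ) < Real.log 2 := Real.log_pos (by norm_num)
  -- bound on the second term (in natural logs)
  have hbound : -(α * μ) ≤ (1 - δ) * Real.log ((1 - δ) / (1 - μ)) := by
    rcases eq_or_lt_of_le h with heq | hlt
    · have : 1 - δ = 0 := by rw [hδ]; linarith
      rw [this]
      nlinarith
    · have h1δ : (0:ℝ) < 1 - δ := by rw [hδ]; linarith
      have h2 := Real.log_le_sub_one_of_pos (show (0:ℝ) < (1 - μ) / (1 - δ) by positivity)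
      have hrev : Real.log ((1 - δ) / (1 - μ)) = -Real.log ((1 - μ) / (1 - δ)) := by
        rw [← Real.log_inv, inv_div]
      rw [hrev]
      have h3 : 1 - (1 - μ) / (1 - δ) ≤ -Real.log ((1 - μ) / (1 - δ)) := by linarith
      have h4 : (1 - δ) * (1 - (1 - μ) / (1 - δ)) = μ - δ := by
        field_simp; ring
      have h5 := mul_le_mul_of_nonneg_left h3 h1δ.le
      rw [h4] at h5
      have : μ - δ = -(α * μ) := by rw [hδ]; ring
      linarith [this ▸ h5]
  -- key inequality in natural logs
  have hA := aux_key α hα.le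
  have key : (1 / 2) * α * L * μ ≤ (1 + α) * μ * L + (1 - δ) * Real.log ((1 - δ) / (1 - μ)) := by
    nlinarith [mul_le_mul_of_nonneg_left hA hμ0.le]
  -- convert to logb
  simp only [Real.logb]
  calc (1 / 2) * α * (L / Real.log 2) * μ
      = ((1 / 2) * α * L * μ) / Real.log 2 := by ring
    _ ≤ ((1 + α) * μ * L + (1 - δ) * Real.log ((1 - δ) / (1 - μ))) / Real.log 2 := by
        gcongr
    _ = (1 + α) * μ * (L / Real.log 2) +
          (1 - δ) * (Real.log ((1 - δ) / (1 - μ)) / Real.log 2) := by ring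
end

section
/- Let X₁, …, X_n be Boolean random variables, and suppose there exists λ > 0 such that for every subset S ⊆ [n], Pr[∧_{i∈S} X_i = 1] ≤ λ·2^{−|S|}. Then for every α ∈ [0, 1/2], Pr[Σ_{i=1}^n X_i ≥ (1/2 + α)n] ≤ λ·2^{−n·D(1/2+α ‖ 1/2)}, where D(δ‖μ) is the binary relative entropy in bits. -/
open Finset Real in
private lemma powerset_sum_pow {n : ℕ} (a b : ℝ) (T : Finset (Fin n)) :
    ∑ S ∈ T.powerset, a ^ S.card * b ^ (n - S.card) =
      (a + b) ^ T.card * b ^ (n - T.card) := by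
  have h := Finset.prod_add (fun _ : Fin n => a) (fun _ => b) T
  simp only [Finset.prod_const] at h
  calc ∑ S ∈ T.powerset, a ^ S.card * b ^ (n - S.card)
      = ∑ S ∈ T.powerset, (a ^ S.card * b ^ ((T \ S).card)) * b ^ (n - T.card) := by
        refine Finset.sum_congr rfl fun S hS => ?_
        rw [Finset.mem_powerset] at hS
        have h1 := Finset.card_le_card hS
        have h2 : T.card ≤ n := by
          simpa using Finset.card_le_card (Finset.subset_univ T)
        rw [Finset.card_sdiff_of_subset hS, mul_assoc, ← pow_add]
        congr 2
        omega
    _ = (a + b) ^ T.card * b ^ (n - T.card) := by rw [← Finset.sum_mul, ← h]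



/-- Generalized Chernoff bound (Panconesi–Srinivasan / Impagliazzo–Kabanets) with
    μᵢ = 1/2: if every conjunction of the Boolean random variables X₁,…,X_n is at
    most λ times as likely as for independent fair coins, then
    Pr[Σ Xᵢ ≥ (1/2+α)n] ≤ λ·2^{−n·D(1/2+α ‖ 1/2)}. -/
theorem stmt_12 {Ω : Type} [Fintype Ω] (n : ℕ) (p : Ω → ℝ)
    (hp : ∀ ω, 0 ≤ p ω) (hsum : ∑ ω, p ω = 1)
    (X : Fin n → Ω → Bool) (lam : ℝ) (hlam : 0 < lam)
    (h : ∀ S : Finset (Fin n),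
      ∑ ω ∈ Finset.univ.filter (fun ω => ∀ i ∈ S, X i ω = true), p ω ≤
        lam * 2 ^ (-(S.card : ℝ)))
    (α : ℝ) (hα0 : 0 ≤ α) (hα1 : α ≤ 1 / 2) :
    ∑ ω ∈ Finset.univ.filter (fun ω =>
        (1 / 2 + α) * n ≤ ((Finset.univ.filter (fun i => X i ω = true)).card : ℝ)),
      p ω ≤
      lam * 2 ^ (-(n : ℝ) *
        ((1 / 2 + α) * Real.logb 2 ((1 / 2 + α) / (1 / 2)) +
          (1 - (1 / 2 + α)) * Real.logb 2 ((1 - (1 / 2 + α)) / (1 - 1 / 2)))) := by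
  rcases eq_or_lt_of_le hα1 with hhalf | hlt
  · -- α = 1/2 : use h univ
    subst hhalf
    have hnum : (1:ℝ)/2 + 1/2 = 1 := by norm_num
    have hRHS : lam * (2:ℝ) ^ (-(n : ℝ) *
        ((1 / 2 + 1/2) * Real.logb 2 ((1 / 2 + 1/2) / (1 / 2)) +
          (1 - (1 / 2 + 1/2)) * Real.logb 2 ((1 - (1 / 2 + 1/2)) / (1 - 1 / 2))))
        = lam * 2 ^ (-(n:ℝ)) := by
      norm_num
    rw [hRHS]
    have hsub : (Finset.univ.filter (fun ω =>
        (1 / 2 + 1/2) * (n:ℝ) ≤ ((Finset.univ.filter (fun i => X i ω = true)).card : ℝ)))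
        ⊆ Finset.univ.filter (fun ω => ∀ i ∈ (Finset.univ : Finset (Fin n)), X i ω = true) := by
      intro ω hω
      simp only [Finset.mem_filter, Finset.mem_univ, true_and] at hω ⊢
      have hcard : (Finset.univ.filter (fun i => X i ω = true)).card = n := by
        have h1 : (Finset.univ.filter (fun i => X i ω = true)).card ≤ n := by
          simpa using Finset.card_le_card
            (Finset.filter_subset (fun i => X i ω = true) Finset.univ)
        have h2 : (n:ℝ) ≤ ((Finset.univ.filter (fun i => X i ω = true)).card : ℝ) := by
          calc (n:ℝ) = (1/2 + 1/2) * n := by ring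
          _ ≤ _ := hω
        have := Nat.cast_le (α := ℝ).mpr h1
        exact le_antisymm h1 (by exact_mod_cast h2)
      have heq : (Finset.univ.filter (fun i => X i ω = true)) = Finset.univ :=
        Finset.eq_of_subset_of_card_le (Finset.filter_subset _ _) (by simp [hcard])
      intro i _
      have : i ∈ Finset.univ.filter (fun i => X i ω = true) := by rw [heq]; exact Finset.mem_univ i
      exact (Finset.mem_filter.mp this).2
    calc _ ≤ ∑ ω ∈ Finset.univ.filter
          (fun ω => ∀ i ∈ (Finset.univ : Finset (Fin n)), X i ω = true), p ω :=
        Finset.sum_le_sum_of_subset_of_nonneg hsub (fun ω _ _ => hp ω)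
      _ ≤ lam * 2 ^ (-((Finset.univ : Finset (Fin n)).card : ℝ)) := h Finset.univ
      _ = lam * 2 ^ (-(n:ℝ)) := by simp
  · set d : ℝ := 1 / 2 + α with hd
    clear_value d
    have hd0 : (0:ℝ) < d := by rw [hd]; linarith
    have hdh : (1:ℝ)/2 ≤ d := by rw [hd]; linarith
    have hd1 : d < 1 := by rw [hd]; linarith
    have h1d : (0:ℝ) < 1 - d := by linarith
    set t : ℝ := (1 - d) / d with ht
    clear_value t
    have ht0 : 0 < t := by rw [ht]; exact div_pos h1d hd0
    have ht1 : t ≤ 1 := by rw [ht, div_le_one hd0]; linarith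
    set T : Ω → Finset (Fin n) := fun ω => Finset.univ.filter (fun i => X i ω = true) with hT
    have hk : ∀ ω, (T ω).card ≤ n := fun ω => by
      simpa using Finset.card_le_card (Finset.filter_subset _ (Finset.univ : Finset (Fin n)))
    -- Claim 1
    have claim1 : ∑ ω, p ω * t ^ (n - (T ω).card) ≤ lam * ((1 + t) / 2) ^ n := by
      have step_a : ∀ ω, t ^ (n - (T ω).card) =
          ∑ S ∈ (T ω).powerset, (1 - t) ^ S.card * t ^ (n - S.card) := by
        intro ω
        rw [powerset_sum_pow (1 - t) t (T ω)]
        simp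
      have hpow : ∀ ω, (T ω).powerset =
          Finset.univ.filter (fun S : Finset (Fin n) => ∀ i ∈ S, X i ω = true) := by
        intro ω
        ext S
        simp [Finset.mem_powerset, Finset.subset_iff, hT]
      calc ∑ ω, p ω * t ^ (n - (T ω).card)
          = ∑ ω, ∑ S : Finset (Fin n),
              if (∀ i ∈ S, X i ω = true) then
                p ω * ((1 - t) ^ S.card * t ^ (n - S.card)) else 0 := by
            refine Finset.sum_congr rfl fun ω _ => ?_
            rw [step_a ω, Finset.mul_sum, hpow ω, Finset.sum_filter]
        _ = ∑ S : Finset (Fin n), ∑ ω,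
              if (∀ i ∈ S, X i ω = true) then
                p ω * ((1 - t) ^ S.card * t ^ (n - S.card)) else 0 := Finset.sum_comm
        _ = ∑ S : Finset (Fin n), ((1 - t) ^ S.card * t ^ (n - S.card)) *
              ∑ ω ∈ Finset.univ.filter (fun ω => ∀ i ∈ S, X i ω = true), p ω := by
            refine Finset.sum_congr rfl fun S _ => ?_
            rw [← Finset.sum_filter, Finset.mul_sum]
            exact Finset.sum_congr rfl fun ω _ => by ring
        _ ≤ ∑ S : Finset (Fin n), ((1 - t) ^ S.card * t ^ (n - S.card)) *
              (lam * 2 ^ (-(S.card : ℝ))) := by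
            refine Finset.sum_le_sum fun S _ => ?_
            refine mul_le_mul_of_nonneg_left (h S) ?_
            exact mul_nonneg (pow_nonneg (by linarith) _) (pow_nonneg ht0.le _)
        _ = ∑ S : Finset (Fin n), ((1 - t) / 2) ^ S.card * t ^ (n - S.card) * lam := by
            refine Finset.sum_congr rfl fun S _ => ?_
            have h2 : (2:ℝ) ^ (-(S.card : ℝ)) = (1/2 : ℝ) ^ S.card := by
              rw [Real.rpow_neg (by norm_num : (0:ℝ) ≤ 2), Real.rpow_natCast, one_div, inv_pow]
            rw [h2, div_pow, div_pow, one_pow]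
            ring
        _ = (∑ S : Finset (Fin n), ((1 - t) / 2) ^ S.card * t ^ (n - S.card)) * lam := by
            rw [← Finset.sum_mul]
        _ = lam * ((1 + t) / 2) ^ n := by
            have hps := powerset_sum_pow ((1 - t)/2) t (Finset.univ : Finset (Fin n))
            rw [Finset.powerset_univ] at hps
            rw [hps, Finset.card_univ, Fintype.card_fin, Nat.sub_self, pow_zero, mul_one,
              show (1 - t)/2 + t = (1 + t)/2 from by ring, mul_comm]
    -- Claim 2
    have claim2 : (∑ ω ∈ Finset.univ.filter (fun ω => d * n ≤ ((T ω).card : ℝ)), p ω) *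
        t ^ ((1 - d) * (n:ℝ)) ≤ ∑ ω, p ω * t ^ (n - (T ω).card) := by
      rw [Finset.sum_mul]
      calc ∑ ω ∈ Finset.univ.filter (fun ω => d * n ≤ ((T ω).card : ℝ)),
            p ω * t ^ ((1 - d) * (n:ℝ))
          ≤ ∑ ω ∈ Finset.univ.filter (fun ω => d * n ≤ ((T ω).card : ℝ)),
            p ω * t ^ (n - (T ω).card) := by
            refine Finset.sum_le_sum fun ω hω => ?_
            refine mul_le_mul_of_nonneg_left ?_ (hp ω)
            rw [Finset.mem_filter] at hω
            have hcast : ((n - (T ω).card : ℕ) : ℝ) = (n:ℝ) - ((T ω).card : ℝ) := by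
              exact_mod_cast Nat.cast_sub (hk ω)
            have hle : ((n - (T ω).card : ℕ) : ℝ) ≤ (1 - d) * (n:ℝ) := by
              rw [hcast]; nlinarith [hω.2]
            have := Real.rpow_le_rpow_of_exponent_ge ht0 ht1 hle
            rwa [Real.rpow_natCast] at this
        _ ≤ ∑ ω, p ω * t ^ (n - (T ω).card) := by
            refine Finset.sum_le_sum_of_subset_of_nonneg (Finset.filter_subset _ _)
              fun ω _ _ => mul_nonneg (hp ω) (pow_nonneg ht0.le _)
    -- Claim 3
    have claim3 : lam * ((1 + t) / 2) ^ n =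
        (lam * 2 ^ (-(n : ℝ) * (d * Real.logb 2 (d / (1/2)) +
          (1 - d) * Real.logb 2 ((1 - d) / (1 - 1/2))))) * t ^ ((1 - d) * (n:ℝ)) := by
      have hL2 : Real.log 2 ≠ 0 := ne_of_gt (Real.log_pos (by norm_num))
      have h1t : (0:ℝ) < (1 + t) / 2 := by linarith
      have hlog1 : Real.log ((1 + t)/2) = -(Real.log 2 + Real.log d) := by
        have : (1 + t)/2 = (2 * d)⁻¹ := by
          rw [ht]; field_simp; ring
        rw [this, Real.log_inv, Real.log_mul (by norm_num) hd0.ne']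
      have hlogt : Real.log t = Real.log (1 - d) - Real.log d := by
        rw [ht, Real.log_div h1d.ne' hd0.ne']
      have hdd : d / (1/2 : ℝ) = 2 * d := by ring
      have hdd2 : (1 - d) / (1 - 1/2 : ℝ) = 2 * (1 - d) := by ring
      have key : (((1 + t) / 2 : ℝ)) ^ n =
          (2:ℝ) ^ (-(n : ℝ) * (d * Real.logb 2 (d / (1/2)) +
            (1 - d) * Real.logb 2 ((1 - d) / (1 - 1/2)))) * t ^ ((1 - d) * (n:ℝ)) := by
        rw [← Real.exp_log (x := ((1 + t)/2)^n) (pow_pos h1t n),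
            Real.rpow_def_of_pos (by norm_num : (0:ℝ) < 2),
            Real.rpow_def_of_pos ht0, ← Real.exp_add, Real.log_pow]
        congr 1
        rw [hlog1, hlogt, hdd, hdd2, Real.logb, Real.logb,
            Real.log_mul (by norm_num) hd0.ne', Real.log_mul (by norm_num) h1d.ne']
        field_simp
        ring
      rw [key]; ring
    -- Combine
    have hc : (0:ℝ) < t ^ ((1 - d) * (n:ℝ)) := Real.rpow_pos_of_pos ht0 _
    have final := claim2.trans (claim1.trans_eq claim3)
    exact le_of_mul_le_mul_right final hc
end
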